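/- Let {ψ(θ,S), θ,S ∈ T_0} be a biadmissible family of nonnegative random variables and for each stopping time S ∈ T_0 let v(S) = ess sup_{τ_1,τ_2 ∈ T_S} E[ψ(τ_1,τ_2) | F_S]. Then the family {v(S), S ∈ T_0} is admissible (v(S) is nonnegative F_S-measurable and v(S) = v(S') a.s. on {S = S'}) and is a supermartingale system: for any S ∈ T_0 and θ, θ' ∈ T_S with θ ≥ θ' a.s., E[v(θ) | F_{θ'}] ≤ v(θ') a.s. -/

import Mathlib

open MeasureTheory Filter Set Topology

variable {Ω : Type*}

/-- `τ` belongs to `T_0`: it is a stopping time of `𝓕` with values in `[0, T]`. -/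
def MemT0 {m0 : MeasurableSpace Ω} (𝓕 : MeasureTheory.Filtration ℝ m0) (T : ℝ)
    (τ : Ω → ℝ) : Prop :=
  MeasureTheory.IsStoppingTime 𝓕 (fun ω => (τ ω : WithTop ℝ)) ∧ ∀ ω, τ ω ∈ Set.Icc (0 : ℝ) T

/-- `v` is an essential supremum of the family `f i`, `i` ranging over `{i | P i}`:
it dominates every member a.s. and is a.s. below any other a.s. upper bound. -/
def IsEssSupFam {m0 : MeasurableSpace Ω} (μ : MeasureTheory.Measure Ω) {ι : Sort*}
    (P : ι → Prop) (f : ι → Ω → ℝ) (v : Ω → ℝ) : Prop :=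
  (∀ i, P i → f i ≤ᵐ[μ] v) ∧ ∀ w : Ω → ℝ, (∀ i, P i → f i ≤ᵐ[μ] w) → v ≤ᵐ[μ] w

/-- `v` is an essential infimum of the family `f i`, `i` ranging over `{i | P i}`. -/
def IsEssInfFam {m0 : MeasurableSpace Ω} (μ : MeasureTheory.Measure Ω) {ι : Sort*}
    (P : ι → Prop) (f : ι → Ω → ℝ) (v : Ω → ℝ) : Prop :=
  (∀ i, P i → v ≤ᵐ[μ] f i) ∧ ∀ w : Ω → ℝ, (∀ i, P i → w ≤ᵐ[μ] f i) → w ≤ᵐ[μ] v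

/-- An admissible family of nonnegative random variables indexed by the stopping
times in `T_0`: `φ τ` is a nonnegative `F_τ`-measurable random variable, and
`φ τ = φ τ'` a.s. on `{τ = τ'}`. -/
def Admissible {m0 : MeasurableSpace Ω} (𝓕 : MeasureTheory.Filtration ℝ m0) (T : ℝ)
    (μ : MeasureTheory.Measure Ω) (φ : (Ω → ℝ) → Ω → ℝ) : Prop :=
  (∀ τ (hτ : MemT0 𝓕 T τ),
      Measurable[hτ.1.measurableSpace] (φ τ) ∧ ∀ ω, 0 ≤ φ τ ω) ∧
  ∀ τ τ', MemT0 𝓕 T τ → MemT0 𝓕 T τ' →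
    ∀ᵐ ω ∂μ, τ ω = τ' ω → φ τ ω = φ τ' ω

/-- An a.e. variant of admissibility (for families defined only up to a.s. equality,
such as value-function families): `φ τ` is a.s. nonnegative and a.s. equal to some
`F_τ`-measurable random variable, and `φ τ = φ τ'` a.s. on `{τ = τ'}`. -/
def AdmissibleAE {m0 : MeasurableSpace Ω} (𝓕 : MeasureTheory.Filtration ℝ m0) (T : ℝ)
    (μ : MeasureTheory.Measure Ω) (φ : (Ω → ℝ) → Ω → ℝ) : Prop :=
  (∀ τ (hτ : MemT0 𝓕 T τ),
      (∀ᵐ ω ∂μ, 0 ≤ φ τ ω) ∧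
      ∃ w : Ω → ℝ, Measurable[hτ.1.measurableSpace] w ∧ φ τ =ᵐ[μ] w) ∧
  ∀ τ τ', MemT0 𝓕 T τ → MemT0 𝓕 T τ' →
    ∀ᵐ ω ∂μ, τ ω = τ' ω → φ τ ω = φ τ' ω

/-- A biadmissible family: `ψ τ S` is a nonnegative `F_{τ ∨ S}`-measurable random
variable, and `ψ τ S = ψ τ' S'` a.s. on `{τ = τ'} ∩ {S = S'}`. -/
def Biadmissible {m0 : MeasurableSpace Ω} (𝓕 : MeasureTheory.Filtration ℝ m0) (T : ℝ)
    (μ : MeasureTheory.Measure Ω) (ψ : (Ω → ℝ) → (Ω → ℝ) → Ω → ℝ) : Prop :=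
  (∀ τ S (hτ : MemT0 𝓕 T τ) (hS : MemT0 𝓕 T S),
      Measurable[(hτ.1.max hS.1).measurableSpace] (ψ τ S) ∧ ∀ ω, 0 ≤ ψ τ S ω) ∧
  ∀ τ τ' S S', MemT0 𝓕 T τ → MemT0 𝓕 T τ' → MemT0 𝓕 T S → MemT0 𝓕 T S' →
    ∀ᵐ ω ∂μ, τ ω = τ' ω → S ω = S' ω → ψ τ S ω = ψ τ' S' ω

/-- `θn ↓ θ` a.s.: the sequence is a.s. nonincreasing and converges a.s. to `θ`. -/
def DownAS {m0 : MeasurableSpace Ω} (μ : MeasureTheory.Measure Ω)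
    (θn : ℕ → Ω → ℝ) (θ : Ω → ℝ) : Prop :=
  ∀ᵐ ω ∂μ, (∀ n, θn (n + 1) ω ≤ θn n ω) ∧
    Filter.Tendsto (fun n => θn n ω) Filter.atTop (nhds (θ ω))

/-- `θn ↑ θ` a.s.: the sequence is a.s. nondecreasing and converges a.s. to `θ`. -/
def UpAS {m0 : MeasurableSpace Ω} (μ : MeasureTheory.Measure Ω)
    (θn : ℕ → Ω → ℝ) (θ : Ω → ℝ) : Prop :=
  ∀ᵐ ω ∂μ, (∀ n, θn n ω ≤ θn (n + 1) ω) ∧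
    Filter.Tendsto (fun n => θn n ω) Filter.atTop (nhds (θ ω))

/-- The family `φ` is right continuous along stopping times in expectation. -/
def RCE {m0 : MeasurableSpace Ω} (𝓕 : MeasureTheory.Filtration ℝ m0) (T : ℝ)
    (μ : MeasureTheory.Measure Ω) (φ : (Ω → ℝ) → Ω → ℝ) : Prop :=
  ∀ θ, MemT0 𝓕 T θ → ∀ θn : ℕ → Ω → ℝ, (∀ n, MemT0 𝓕 T (θn n)) → DownAS μ θn θ →
    Filter.Tendsto (fun n => ∫ ω, φ (θn n) ω ∂μ) Filter.atTop (nhds (∫ ω, φ θ ω ∂μ))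

/-- The family `φ` is left continuous along stopping times in expectation. -/
def LCE {m0 : MeasurableSpace Ω} (𝓕 : MeasureTheory.Filtration ℝ m0) (T : ℝ)
    (μ : MeasureTheory.Measure Ω) (φ : (Ω → ℝ) → Ω → ℝ) : Prop :=
  ∀ θ, MemT0 𝓕 T θ → ∀ θn : ℕ → Ω → ℝ, (∀ n, MemT0 𝓕 T (θn n)) → UpAS μ θn θ →
    Filter.Tendsto (fun n => ∫ ω, φ (θn n) ω ∂μ) Filter.atTop (nhds (∫ ω, φ θ ω ∂μ))

/-- The biadmissible family `ψ` is uniformly right continuous in expectation along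
stopping times: for `S_n ↓ S` a.s. (all in `T_0`), the expectation of the essential
supremum over `θ ∈ T_0` of `|ψ(θ, S) - ψ(θ, S_n)|` (resp. `|ψ(S, θ) - ψ(S_n, θ)|`)
tends to `0`. -/
def URCE {m0 : MeasurableSpace Ω} (𝓕 : MeasureTheory.Filtration ℝ m0) (T : ℝ)
    (μ : MeasureTheory.Measure Ω) (ψ : (Ω → ℝ) → (Ω → ℝ) → Ω → ℝ) : Prop :=
  ∀ S, MemT0 𝓕 T S → ∀ Sn : ℕ → Ω → ℝ, (∀ n, MemT0 𝓕 T (Sn n)) → DownAS μ Sn S →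
    (∀ D : ℕ → Ω → ℝ,
      (∀ n, IsEssSupFam μ (MemT0 𝓕 T) (fun θ ω => |ψ θ S ω - ψ θ (Sn n) ω|) (D n)) →
      Filter.Tendsto (fun n => ∫ ω, D n ω ∂μ) Filter.atTop (nhds 0)) ∧
    ∀ D : ℕ → Ω → ℝ,
      (∀ n, IsEssSupFam μ (MemT0 𝓕 T) (fun θ ω => |ψ S θ ω - ψ (Sn n) θ ω|) (D n)) →
      Filter.Tendsto (fun n => ∫ ω, D n ω ∂μ) Filter.atTop (nhds 0)

/-- The biadmissible family `ψ` is uniformly left continuous in expectation along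
stopping times. -/
def ULCE {m0 : MeasurableSpace Ω} (𝓕 : MeasureTheory.Filtration ℝ m0) (T : ℝ)
    (μ : MeasureTheory.Measure Ω) (ψ : (Ω → ℝ) → (Ω → ℝ) → Ω → ℝ) : Prop :=
  ∀ S, MemT0 𝓕 T S → ∀ Sn : ℕ → Ω → ℝ, (∀ n, MemT0 𝓕 T (Sn n)) → UpAS μ Sn S →
    (∀ D : ℕ → Ω → ℝ,
      (∀ n, IsEssSupFam μ (MemT0 𝓕 T) (fun θ ω => |ψ θ S ω - ψ θ (Sn n) ω|) (D n)) →
      Filter.Tendsto (fun n => ∫ ω, D n ω ∂μ) Filter.atTop (nhds 0)) ∧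
    ∀ D : ℕ → Ω → ℝ,
      (∀ n, IsEssSupFam μ (MemT0 𝓕 T) (fun θ ω => |ψ S θ ω - ψ (Sn n) θ ω|) (D n)) →
      Filter.Tendsto (fun n => ∫ ω, D n ω ∂μ) Filter.atTop (nhds 0)

set_option linter.unusedSectionVars false
set_option maxHeartbeats 1000000
open scoped Classical

section Aux
variable {m0 : MeasurableSpace Ω} {μ : Measure Ω} {𝓕 : Filtration ℝ m0} {T : ℝ}

lemma null_mem_filt (hFnull : ∀ A : Set Ω, μ A = 0 → MeasurableSet[𝓕 0] A)
    {t : ℝ} (ht : 0 ≤ t) {A : Set Ω} (hA : μ A = 0) : MeasurableSet[𝓕 t] A :=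
  𝓕.mono ht _ (hFnull A hA)

lemma memT0_meas {τ : Ω → ℝ} (hτ : MemT0 𝓕 T τ) (t : ℝ) :
    MeasurableSet[𝓕 t] {ω | τ ω ≤ t} := by
  have := hτ.1 t
  simpa only [WithTop.coe_le_coe] using this

lemma memT0_set_meas {τ : Ω → ℝ} (hτ : MemT0 𝓕 T τ) {s : Set Ω}
    (hs : MeasurableSet[hτ.1.measurableSpace] s) (t : ℝ) :
    MeasurableSet[𝓕 t] (s ∩ {ω | τ ω ≤ t}) := by
  have := ((hτ.1.measurableSet s).1 hs).2 t
  simpa only [WithTop.coe_le_coe] using this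

lemma measurableSet_of_symmDiff_null (hFnull : ∀ A : Set Ω, μ A = 0 → MeasurableSet[𝓕 0] A)
    {t : ℝ} (ht : 0 ≤ t) {s s' : Set Ω}
    (hs' : MeasurableSet[𝓕 t] s') (h1 : μ (s \ s') = 0) (h2 : μ (s' \ s) = 0) :
    MeasurableSet[𝓕 t] s := by
  have hs : s = (s' \ (s' \ s)) ∪ (s \ s') := by
    ext ω; simp only [Set.mem_union, Set.mem_diff]; tauto
  rw [hs]
  exact ((hs'.diff (null_mem_filt hFnull ht h2)).union (null_mem_filt hFnull ht h1))

lemma empty_inter_le_neg {τ : Ω → ℝ} (hτ : MemT0 𝓕 T τ) {t : ℝ} (ht : ¬ 0 ≤ t)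
    (A : Set Ω) : A ∩ {ω | τ ω ≤ t} = ∅ := by
  ext ω
  simp only [Set.mem_inter_iff, Set.mem_setOf_eq, Set.mem_empty_iff_false, iff_false, not_and]
  intro _ h
  exact ht (le_trans (hτ.2 ω).1 h)

lemma null_mem_stopping (hFnull : ∀ A : Set Ω, μ A = 0 → MeasurableSet[𝓕 0] A)
    {τ : Ω → ℝ} (hτ : MemT0 𝓕 T τ) {A : Set Ω} (hA : μ A = 0) :
    MeasurableSet[hτ.1.measurableSpace] A := by
  rw [hτ.1.measurableSet]
  refine ⟨le_iSup (fun t => 𝓕 t) (0:ℝ) A (hFnull A hA), ?_⟩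
  simp only [WithTop.coe_le_coe]
  intro t
  by_cases ht : 0 ≤ t
  · exact null_mem_filt hFnull ht (measure_mono_null Set.inter_subset_left hA)
  · rw [empty_inter_le_neg hτ ht]; exact @MeasurableSet.empty _ (𝓕 t)

lemma measurableSpace_mono_ae (hFnull : ∀ A : Set Ω, μ A = 0 → MeasurableSet[𝓕 0] A)
    {σ τ : Ω → ℝ} (hσ : MemT0 𝓕 T σ) (hτ : MemT0 𝓕 T τ) (h : σ ≤ᵐ[μ] τ) :
    hσ.1.measurableSpace ≤ hτ.1.measurableSpace := by
  intro B hB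
  rw [hσ.1.measurableSet] at hB
  rw [hτ.1.measurableSet]
  simp only [WithTop.coe_le_coe] at hB ⊢
  refine ⟨hB.1, ?_⟩
  intro t
  by_cases ht : 0 ≤ t
  · have hN : μ {ω | ¬ σ ω ≤ τ ω} = 0 := by
      have := h
      rw [EventuallyLE, ae_iff] at this
      simpa using this
    refine measurableSet_of_symmDiff_null hFnull ht
      (s' := (B ∩ {ω | σ ω ≤ t}) ∩ {ω | τ ω ≤ t}) ((hB.2 t).inter (memT0_meas hτ t)) ?_ ?_
    · refine measure_mono_null ?_ hN
      intro ω hω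
      simp only [Set.mem_diff, Set.mem_inter_iff, Set.mem_setOf_eq] at hω ⊢
      obtain ⟨⟨h1, h2⟩, h3⟩ := hω
      intro hle
      exact h3 ⟨⟨h1, le_trans hle h2⟩, h2⟩
    · refine measure_mono_null ?_ (measure_empty)
      intro ω hω
      simp only [Set.mem_diff, Set.mem_inter_iff, Set.mem_setOf_eq] at hω
      exact absurd ⟨hω.1.1.1, hω.1.2⟩ hω.2
  · rw [empty_inter_le_neg hτ ht]; exact @MeasurableSet.empty _ (𝓕 t)

lemma measurableSet_of_subset_eq {σ τ : Ω → ℝ} (hσ : MemT0 𝓕 T σ) (hτ : MemT0 𝓕 T τ)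
    {s : Set Ω} (hsub : s ⊆ {ω | σ ω = τ ω})
    (hs : MeasurableSet[hσ.1.measurableSpace] s) :
    MeasurableSet[hτ.1.measurableSpace] s := by
  rw [hσ.1.measurableSet] at hs
  rw [hτ.1.measurableSet]
  simp only [WithTop.coe_le_coe] at hs ⊢
  refine ⟨hs.1, ?_⟩
  intro t
  have : s ∩ {ω | τ ω ≤ t} = s ∩ {ω | σ ω ≤ t} := by
    ext ω
    simp only [Set.mem_inter_iff, Set.mem_setOf_eq]
    constructor
    · rintro ⟨h1, h2⟩; exact ⟨h1, by rw [hsub h1]; exact h2⟩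
    · rintro ⟨h1, h2⟩; exact ⟨h1, by rw [← hsub h1]; exact h2⟩
  rw [this]; exact hs.2 t

end Aux

lemma ae_restrict_iff_indicator' {m0 : MeasurableSpace Ω} {μ : Measure Ω} {s : Set Ω}
    (hsm : MeasurableSet s) {f g : Ω → ℝ} :
    f =ᵐ[μ.restrict s] g ↔ s.indicator f =ᵐ[μ] s.indicator g :=
  ae_eq_restrict_iff_indicator_ae_eq hsm

section Aux2
variable {m0 : MeasurableSpace Ω} {μ : Measure Ω} [IsProbabilityMeasure μ]
  {𝓕 : Filtration ℝ m0} {T : ℝ}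

/-- conditional expectations wrt `F_σ` and `F_τ` agree a.e. on `{σ = τ}`. -/
lemma condexp_ae_eq_on_eq {σ τ : Ω → ℝ} (hσ : MemT0 𝓕 T σ) (hτ : MemT0 𝓕 T τ)
    (f : Ω → ℝ) :
    μ[f|hσ.1.measurableSpace] =ᵐ[μ.restrict {ω | σ ω = τ ω}] μ[f|hτ.1.measurableSpace] := by
  refine condExp_ae_eq_restrict_of_measurableSpace_eq_on hσ.1.measurableSpace_le
    hτ.1.measurableSpace_le (by simpa using hσ.1.measurableSet_eq_stopping_time hτ.1) fun s => ?_
  constructor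
  · exact measurableSet_of_subset_eq hσ hτ Set.inter_subset_left
  · refine fun h => measurableSet_of_subset_eq hτ hσ ?_ h
    intro ω hω
    exact (Set.inter_subset_left hω).symm

lemma condexp_restrict_congr {m : MeasurableSpace Ω} (hm : m ≤ m0) {s : Set Ω}
    (hs : MeasurableSet[m] s) {f g : Ω → ℝ} (hf : Integrable f μ) (hg : Integrable g μ)
    (h : f =ᵐ[μ.restrict s] g) :
    μ[f|m] =ᵐ[μ.restrict s] μ[g|m] := by
  have hsm : MeasurableSet[m0] s := hm _ hs
  rw [ae_restrict_iff_indicator' hsm] at h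
  rw [ae_restrict_iff_indicator' hsm]
  calc s.indicator (μ[f|m]) =ᵐ[μ] μ[s.indicator f|m] := (condExp_indicator hf hs).symm
    _ =ᵐ[μ] μ[s.indicator g|m] := condExp_congr_ae h
    _ =ᵐ[μ] s.indicator (μ[g|m]) := condExp_indicator hg hs

/-- stopping time surgery -/
lemma memT0_piecewise (hFnull : ∀ A : Set Ω, μ A = 0 → MeasurableSet[𝓕 0] A)
    {θ₁ θ₂ p q : Ω → ℝ} (hθ₁ : MemT0 𝓕 T θ₁) (hθ₂ : MemT0 𝓕 T θ₂)
    (hp : MemT0 𝓕 T p) (hq : MemT0 𝓕 T q) {B : Set Ω}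
    (hB₁ : MeasurableSet[hθ₁.1.measurableSpace] B)
    (hB₂ : MeasurableSet[hθ₂.1.measurableSpace] Bᶜ)
    (hp₁ : θ₁ ≤ᵐ[μ] p) (hq₂ : θ₂ ≤ᵐ[μ] q) :
    MemT0 𝓕 T (fun ω => if ω ∈ B then p ω else q ω) := by
  constructor
  · intro t
    have hsplit : {ω | (if ω ∈ B then p ω else q ω) ≤ t}
        = (B ∩ {ω | p ω ≤ t}) ∪ (Bᶜ ∩ {ω | q ω ≤ t}) := by
      ext ω
      by_cases hω : ω ∈ B <;>
        simp [Set.mem_setOf_eq, hω]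
    simp only [WithTop.coe_le_coe]
    rw [hsplit]
    by_cases ht : 0 ≤ t
    · have hN₁ : μ {ω | ¬ θ₁ ω ≤ p ω} = 0 := by
        have := hp₁; rw [EventuallyLE, ae_iff] at this; simpa using this
      have hN₂ : μ {ω | ¬ θ₂ ω ≤ q ω} = 0 := by
        have := hq₂; rw [EventuallyLE, ae_iff] at this; simpa using this
      have h1 : MeasurableSet[𝓕 t] (B ∩ {ω | p ω ≤ t}) := by
        refine measurableSet_of_symmDiff_null hFnull ht
          (s' := (B ∩ {ω | θ₁ ω ≤ t}) ∩ {ω | p ω ≤ t}) ((memT0_set_meas hθ₁ hB₁ t).inter (memT0_meas hp t)) ?_ ?_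
        · refine measure_mono_null ?_ hN₁
          intro ω hω
          have h1 := hω.1.1
          have h2 := hω.1.2
          have h3 := hω.2
          show ¬ _ ≤ _
          intro hle
          exact h3 ⟨⟨h1, le_trans hle h2⟩, h2⟩
        · refine measure_mono_null ?_ (measure_empty)
          intro ω hω
          exact absurd ⟨hω.1.1.1, hω.1.2⟩ hω.2
      have h2 : MeasurableSet[𝓕 t] (Bᶜ ∩ {ω | q ω ≤ t}) := by
        refine measurableSet_of_symmDiff_null hFnull ht
          (s' := (Bᶜ ∩ {ω | θ₂ ω ≤ t}) ∩ {ω | q ω ≤ t}) ((memT0_set_meas hθ₂ hB₂ t).inter (memT0_meas hq t)) ?_ ?_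
        · refine measure_mono_null ?_ hN₂
          intro ω hω
          have h1 := hω.1.1
          have h2 := hω.1.2
          have h3 := hω.2
          show ¬ _ ≤ _
          intro hle
          exact h3 ⟨⟨h1, le_trans hle h2⟩, h2⟩
        · refine measure_mono_null ?_ (measure_empty)
          intro ω hω
          exact absurd ⟨hω.1.1.1, hω.1.2⟩ hω.2
      exact h1.union h2
    · have hB' : B ∩ {ω | p ω ≤ t} = ∅ := empty_inter_le_neg hp ht B
      have hB'' : Bᶜ ∩ {ω | q ω ≤ t} = ∅ := empty_inter_le_neg hq ht Bᶜ
      rw [hB', hB'', Set.empty_union]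
      exact @MeasurableSet.empty _ (𝓕 t)
  · intro ω
    by_cases hω : ω ∈ B <;> simp only [hω, if_true, if_false]
    · exact hp.2 ω
    · exact hq.2 ω

end Aux2

section Aux3
variable {m0 : MeasurableSpace Ω} {μ : Measure Ω} [IsProbabilityMeasure μ]
  {𝓕 : Filtration ℝ m0} {T : ℝ} {ψ : (Ω → ℝ) → (Ω → ℝ) → Ω → ℝ}

/-- Directedness (lattice property) of the conditional-expectation family. -/
lemma directed_step (hFnull : ∀ A : Set Ω, μ A = 0 → MeasurableSet[𝓕 0] A)
    (hψ : Biadmissible 𝓕 T μ ψ)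
    (hψint : ∀ τ₁ τ₂, MemT0 𝓕 T τ₁ → MemT0 𝓕 T τ₂ → Integrable (ψ τ₁ τ₂) μ)
    {τ : Ω → ℝ} (hτ : MemT0 𝓕 T τ) {p q : (Ω → ℝ) × (Ω → ℝ)}
    (hp : MemT0 𝓕 T p.1 ∧ MemT0 𝓕 T p.2 ∧ τ ≤ᵐ[μ] p.1 ∧ τ ≤ᵐ[μ] p.2)
    (hq : MemT0 𝓕 T q.1 ∧ MemT0 𝓕 T q.2 ∧ τ ≤ᵐ[μ] q.1 ∧ τ ≤ᵐ[μ] q.2) :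
    ∃ r : (Ω → ℝ) × (Ω → ℝ),
      (MemT0 𝓕 T r.1 ∧ MemT0 𝓕 T r.2 ∧ τ ≤ᵐ[μ] r.1 ∧ τ ≤ᵐ[μ] r.2) ∧
      μ[ψ p.1 p.2|hτ.1.measurableSpace] ≤ᵐ[μ] μ[ψ r.1 r.2|hτ.1.measurableSpace] ∧
      μ[ψ q.1 q.2|hτ.1.measurableSpace] ≤ᵐ[μ] μ[ψ r.1 r.2|hτ.1.measurableSpace] := by
  set mτ := hτ.1.measurableSpace with hmτ
  have hle : mτ ≤ m0 := hτ.1.measurableSpace_le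
  set fp := μ[ψ p.1 p.2|mτ] with hfp
  set fq := μ[ψ q.1 q.2|mτ] with hfq
  have hfpm : Measurable[mτ] fp := stronglyMeasurable_condExp.measurable
  have hfqm : Measurable[mτ] fq := stronglyMeasurable_condExp.measurable
  set B : Set Ω := {ω | fq ω ≤ fp ω} with hB
  have hBm : MeasurableSet[mτ] B := measurableSet_le hfqm hfpm
  have hBm0 : MeasurableSet[m0] B := hle _ hBm
  set r1 : Ω → ℝ := fun ω => if ω ∈ B then p.1 ω else q.1 ω with hr1
  set r2 : Ω → ℝ := fun ω => if ω ∈ B then p.2 ω else q.2 ω with hr2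
  have hr1T : MemT0 𝓕 T r1 :=
    memT0_piecewise hFnull hτ hτ hp.1 hq.1 hBm hBm.compl hp.2.2.1 hq.2.2.1
  have hr2T : MemT0 𝓕 T r2 :=
    memT0_piecewise hFnull hτ hτ hp.2.1 hq.2.1 hBm hBm.compl hp.2.2.2 hq.2.2.2
  have hτr1 : τ ≤ᵐ[μ] r1 := by
    filter_upwards [hp.2.2.1, hq.2.2.1] with ω h1 h2
    by_cases hω : ω ∈ B <;> simp [hr1, hω, h1, h2]
  have hτr2 : τ ≤ᵐ[μ] r2 := by
    filter_upwards [hp.2.2.2, hq.2.2.2] with ω h1 h2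
    by_cases hω : ω ∈ B <;> simp [hr2, hω, h1, h2]
  refine ⟨(r1, r2), ⟨hr1T, hr2T, hτr1, hτr2⟩, ?_, ?_⟩
  · -- fp ≤ f r a.e.
    have hOnB : ψ r1 r2 =ᵐ[μ.restrict B] ψ p.1 p.2 := by
      have h2 := hψ.2 r1 p.1 r2 p.2 hr1T hp.1 hr2T hp.2.1
      rw [Filter.EventuallyEq, ae_restrict_iff' hBm0]
      filter_upwards [h2] with ω h hmem
      exact h (by simp [hr1, hmem]) (by simp [hr2, hmem])
    have hceB : μ[ψ r1 r2|mτ] =ᵐ[μ.restrict B] fp :=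
      condexp_restrict_congr hle hBm (hψint _ _ hr1T hr2T) (hψint _ _ hp.1 hp.2.1) hOnB
    have hOnBc : ψ r1 r2 =ᵐ[μ.restrict Bᶜ] ψ q.1 q.2 := by
      have h2 := hψ.2 r1 q.1 r2 q.2 hr1T hq.1 hr2T hq.2.1
      rw [Filter.EventuallyEq, ae_restrict_iff' hBm0.compl]
      filter_upwards [h2] with ω h hmem
      have : ω ∉ B := hmem
      exact h (by simp [hr1, this]) (by simp [hr2, this])
    have hceBc : μ[ψ r1 r2|mτ] =ᵐ[μ.restrict Bᶜ] fq :=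
      condexp_restrict_congr hle hBm.compl (hψint _ _ hr1T hr2T) (hψint _ _ hq.1 hq.2.1) hOnBc
    refine ae_of_ae_restrict_of_ae_restrict_compl B ?_ ?_
    · filter_upwards [hceB] with ω h
      rw [h]
    · have hmem : ∀ᵐ ω ∂(μ.restrict Bᶜ), ω ∈ Bᶜ :=
        (ae_restrict_iff' hBm0.compl).mpr (Filter.Eventually.of_forall fun ω h => h)
      filter_upwards [hceBc, hmem] with ω h hm
      rw [h]
      exact le_of_not_ge hm
  · have hOnB : ψ r1 r2 =ᵐ[μ.restrict B] ψ p.1 p.2 := by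
      have h2 := hψ.2 r1 p.1 r2 p.2 hr1T hp.1 hr2T hp.2.1
      rw [Filter.EventuallyEq, ae_restrict_iff' hBm0]
      filter_upwards [h2] with ω h hmem
      exact h (by simp [hr1, hmem]) (by simp [hr2, hmem])
    have hceB : μ[ψ r1 r2|mτ] =ᵐ[μ.restrict B] fp :=
      condexp_restrict_congr hle hBm (hψint _ _ hr1T hr2T) (hψint _ _ hp.1 hp.2.1) hOnB
    have hOnBc : ψ r1 r2 =ᵐ[μ.restrict Bᶜ] ψ q.1 q.2 := by
      have h2 := hψ.2 r1 q.1 r2 q.2 hr1T hq.1 hr2T hq.2.1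
      rw [Filter.EventuallyEq, ae_restrict_iff' hBm0.compl]
      filter_upwards [h2] with ω h hmem
      have : ω ∉ B := hmem
      exact h (by simp [hr1, this]) (by simp [hr2, this])
    have hceBc : μ[ψ r1 r2|mτ] =ᵐ[μ.restrict Bᶜ] fq :=
      condexp_restrict_congr hle hBm.compl (hψint _ _ hr1T hr2T) (hψint _ _ hq.1 hq.2.1) hOnBc
    refine ae_of_ae_restrict_of_ae_restrict_compl B ?_ ?_
    · have hmem : ∀ᵐ ω ∂(μ.restrict B), ω ∈ B :=
        (ae_restrict_iff' hBm0).mpr (Filter.Eventually.of_forall fun ω h => h)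
      filter_upwards [hceB, hmem] with ω h hm
      rw [h]
      exact hm
    · filter_upwards [hceBc] with ω h
      rw [h]

end Aux3

section Aux4
variable {m0 : MeasurableSpace Ω} {μ : Measure Ω} [IsProbabilityMeasure μ]
  {𝓕 : Filtration ℝ m0} {T : ℝ} {ψ : (Ω → ℝ) → (Ω → ℝ) → Ω → ℝ}

open Real in
/-- Key lemma: there is a monotone sequence of conditional expectations from the
family converging a.e. to the essential supremum, and the essential supremum has
an `F_τ`-measurable version. -/
lemma key_seq (hFnull : ∀ A : Set Ω, μ A = 0 → MeasurableSet[𝓕 0] A)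
    (hψ : Biadmissible 𝓕 T μ ψ)
    (hψint : ∀ τ₁ τ₂, MemT0 𝓕 T τ₁ → MemT0 𝓕 T τ₂ → Integrable (ψ τ₁ τ₂) μ)
    {τ : Ω → ℝ} (hτ : MemT0 𝓕 T τ) {v : Ω → ℝ}
    (hv : IsEssSupFam μ
      (fun p : (Ω → ℝ) × (Ω → ℝ) =>
        MemT0 𝓕 T p.1 ∧ MemT0 𝓕 T p.2 ∧ τ ≤ᵐ[μ] p.1 ∧ τ ≤ᵐ[μ] p.2)
      (fun p => μ[ψ p.1 p.2 | hτ.1.measurableSpace]) v) :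
    ∃ (Q : ℕ → (Ω → ℝ) × (Ω → ℝ)) (w : Ω → ℝ),
      (∀ n, MemT0 𝓕 T (Q n).1 ∧ MemT0 𝓕 T (Q n).2 ∧ τ ≤ᵐ[μ] (Q n).1 ∧ τ ≤ᵐ[μ] (Q n).2) ∧
      Measurable[hτ.1.measurableSpace] w ∧ v =ᵐ[μ] w ∧
      (∀ᵐ ω ∂μ,
        (∀ n, (μ[ψ (Q n).1 (Q n).2 | hτ.1.measurableSpace]) ω
            ≤ (μ[ψ (Q (n+1)).1 (Q (n+1)).2 | hτ.1.measurableSpace]) ω)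
        ∧ Filter.Tendsto (fun n => (μ[ψ (Q n).1 (Q n).2 | hτ.1.measurableSpace]) ω)
            Filter.atTop (nhds (v ω))) := by
  classical
  set mτ := hτ.1.measurableSpace with hmτ
  have hle : mτ ≤ m0 := hτ.1.measurableSpace_le
  set valid : (Ω → ℝ) × (Ω → ℝ) → Prop :=
    fun p => MemT0 𝓕 T p.1 ∧ MemT0 𝓕 T p.2 ∧ τ ≤ᵐ[μ] p.1 ∧ τ ≤ᵐ[μ] p.2 with hvalid
  set F : (Ω → ℝ) × (Ω → ℝ) → Ω → ℝ := fun p => μ[ψ p.1 p.2 | mτ] with hF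
  have hFm : ∀ p, Measurable[mτ] (F p) := fun p => stronglyMeasurable_condExp.measurable
  have hFm0 : ∀ p, Measurable[m0] (F p) := fun p => (hFm p).mono hle le_rfl
  have hbdd : ∀ (g : ℕ → (Ω → ℝ) × (Ω → ℝ)) (ω : Ω),
      BddAbove (Set.range fun n => arctan (F (g n) ω)) := by
    intro g ω
    refine ⟨π/2, ?_⟩
    rintro x ⟨n, rfl⟩
    exact (arctan_lt_pi_div_two _).le
  have hsupm : ∀ g : ℕ → (Ω → ℝ) × (Ω → ℝ),
      Measurable[m0] (fun ω => ⨆ n, arctan (F (g n) ω)) := by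
    intro g
    exact Measurable.iSup fun n => Real.continuous_arctan.measurable.comp (hFm0 (g n))
  have hsupint : ∀ g : ℕ → (Ω → ℝ) × (Ω → ℝ),
      Integrable (fun ω => ⨆ n, arctan (F (g n) ω)) μ := by
    intro g
    refine Integrable.mono' (integrable_const (π/2)) (hsupm g).aestronglyMeasurable ?_
    refine Filter.Eventually.of_forall fun ω => ?_
    rw [Real.norm_eq_abs, abs_le]
    constructor
    · refine le_trans ?_ (le_ciSup (hbdd g ω) 0)
      exact (neg_pi_div_two_lt_arctan _).le
    · exact ciSup_le fun n => (arctan_lt_pi_div_two _).le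
  set SS : Set ℝ := {x | ∃ g : ℕ → (Ω → ℝ) × (Ω → ℝ), (∀ n, valid (g n)) ∧
      x = ∫ ω, (⨆ n, arctan (F (g n) ω)) ∂μ} with hSS
  have hSne : SS.Nonempty := by
    refine ⟨_, fun _ => (τ, τ), fun _ => ⟨hτ, hτ, ?_, ?_⟩, rfl⟩ <;>
      exact Filter.Eventually.of_forall fun ω => le_refl _
  have hSbdd : BddAbove SS := by
    refine ⟨π/2, ?_⟩
    rintro x ⟨g, hg, rfl⟩
    calc ∫ ω, (⨆ n, arctan (F (g n) ω)) ∂μ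
        ≤ ∫ _ω, (π/2 : ℝ) ∂μ := by
          refine integral_mono (hsupint g) (integrable_const _) fun ω => ?_
          exact ciSup_le fun n => (arctan_lt_pi_div_two _).le
      _ = π/2 := by simp
  set c : ℝ := sSup SS with hc
  have hex : ∀ k : ℕ, ∃ g : ℕ → (Ω → ℝ) × (Ω → ℝ), (∀ n, valid (g n)) ∧
      c - 1/(k+1) < ∫ ω, (⨆ n, arctan (F (g n) ω)) ∂μ := by
    intro k
    have hlt : c - 1/(k+1) < c := by
      have : (0:ℝ) < 1/(k+1) := by positivity
      linarith
    obtain ⟨x, hxS, hx⟩ := exists_lt_of_lt_csSup hSne hlt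
    obtain ⟨g, hg, rfl⟩ := hxS
    exact ⟨g, hg, hx⟩
  choose G hGvalid hGgt using hex
  set P : ℕ → (Ω → ℝ) × (Ω → ℝ) := fun n => G (Nat.unpair n).1 (Nat.unpair n).2 with hP
  have hPvalid : ∀ n, valid (P n) := fun n => hGvalid _ _
  set W : Ω → ℝ := fun ω => ⨆ n, arctan (F (P n) ω) with hW
  have hWm0 : Measurable[m0] W := hsupm P
  have hWint : Integrable W μ := hsupint P
  have hWmem : ∫ ω, W ω ∂μ ∈ SS := ⟨P, hPvalid, rfl⟩
  have hWle_c : ∫ ω, W ω ∂μ ≤ c := le_csSup hSbdd hWmem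
  have hWge : ∀ k : ℕ, c - 1/(k+1) ≤ ∫ ω, W ω ∂μ := by
    intro k
    refine le_trans (hGgt k).le ?_
    refine integral_mono (hsupint (G k)) hWint fun ω => ?_
    refine ciSup_le fun j => ?_
    have := le_ciSup (hbdd P ω) (Nat.pair k j)
    simpa [hP, Nat.unpair_pair] using this
  have hWc : ∫ ω, W ω ∂μ = c := by
    refine le_antisymm hWle_c ?_
    by_contra h
    push_neg at h
    obtain ⟨k, hk⟩ := exists_nat_one_div_lt (sub_pos.2 h)
    have := hWge k
    have : (1:ℝ)/(k+1) ≥ c - ∫ ω, W ω ∂μ := by linarith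
    linarith
  -- W is an a.e. upper bound for all arctan ∘ F q, q valid
  have hub : ∀ q, valid q → ∀ᵐ ω ∂μ, arctan (F q ω) ≤ W ω := by
    intro q hq
    set P' : ℕ → (Ω → ℝ) × (Ω → ℝ) := fun n => Nat.rec q (fun k _ => P k) n with hP'
    have hP'valid : ∀ n, valid (P' n) := by
      intro n; cases n with
      | zero => exact hq
      | succ k => exact hPvalid k
    set W' : Ω → ℝ := fun ω => ⨆ n, arctan (F (P' n) ω) with hW'
    have hW'eq : ∀ ω, W' ω = max (arctan (F q ω)) (W ω) := by
      intro ω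
      refine le_antisymm ?_ ?_
      · refine ciSup_le fun n => ?_
        cases n with
        | zero => exact le_max_left _ _
        | succ k => exact (le_ciSup (hbdd P ω) k).trans (le_max_right _ _)
      · refine max_le (le_ciSup (hbdd P' ω) 0) (ciSup_le fun n => le_ciSup (hbdd P' ω) (n+1))
    have hW'int : Integrable W' μ := hsupint P'
    have hW'le : ∫ ω, W' ω ∂μ ≤ c := le_csSup hSbdd ⟨P', hP'valid, rfl⟩
    have hWW' : ∀ ω, W ω ≤ W' ω := fun ω => by rw [hW'eq ω]; exact le_max_right _ _
    have hz : (fun ω => W' ω - W ω) =ᵐ[μ] 0 := by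
      have hnn : 0 ≤ᵐ[μ] fun ω => W' ω - W ω :=
        Filter.Eventually.of_forall fun ω => sub_nonneg.2 (hWW' ω)
      have hint : Integrable (fun ω => W' ω - W ω) μ := hW'int.sub hWint
      have hiz : ∫ ω, (W' ω - W ω) ∂μ = 0 := by
        rw [integral_sub hW'int hWint]
        have : 0 ≤ ∫ ω, W' ω ∂μ - ∫ ω, W ω ∂μ := by
          rw [sub_nonneg]
          exact integral_mono hWint hW'int hWW'
        rw [hWc] at *
        linarith
      exact (integral_eq_zero_iff_of_nonneg_ae hnn hint).mp hiz
    filter_upwards [hz] with ω h0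
    have : W' ω = W ω := by
      have := sub_eq_zero.mp (by simpa using h0)
      linarith [this]
    rw [← this, hW'eq ω]
    exact le_max_left _ _
  have hvle : ∀ᵐ ω ∂μ, W ω ≤ arctan (v ω) := by
    have hall : ∀ᵐ ω ∂μ, ∀ n, F (P n) ω ≤ v ω :=
      ae_all_iff.2 fun n => hv.1 (P n) (hPvalid n)
    filter_upwards [hall] with ω h
    exact ciSup_le fun n => arctan_strictMono.monotone (h n)
  have hWlow : ∀ ω, -(π/2) < W ω :=
    fun ω => lt_of_lt_of_le (neg_pi_div_two_lt_arctan _) (le_ciSup (hbdd P ω) 0)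
  set w : Ω → ℝ := fun ω => if W ω < π/2 then Real.tan (W ω) else 0 with hw
  have hwval : ∀ ω : Ω, W ω < π/2 → w ω = Real.tan (W ω) := by
    intro ω h
    simp only [hw]
    rw [if_pos h]
  have hWmτ : Measurable[mτ] W :=
    Measurable.iSup fun n => Real.continuous_arctan.measurable.comp (hFm (P n))
  have htanm : Measurable Real.tan := by
    have : Real.tan = fun x => Real.sin x / Real.cos x := by
      funext x; exact Real.tan_eq_sin_div_cos x
    rw [this]
    exact Real.measurable_sin.div Real.measurable_cos
  have hwm : Measurable[mτ] w := by
    refine Measurable.ite (measurableSet_lt hWmτ measurable_const) ?_ measurable_const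
    exact htanm.comp hWmτ
  have hwub : ∀ q, valid q → F q ≤ᵐ[μ] w := by
    intro q hq
    filter_upwards [hub q hq, hvle] with ω h1 h2
    have hWlt : W ω < π/2 := lt_of_le_of_lt h2 (arctan_lt_pi_div_two _)
    have : w ω = Real.tan (W ω) := hwval ω hWlt
    rw [this, ← Real.tan_arctan (F q ω)]
    exact Real.strictMonoOn_tan.monotoneOn (arctan_mem_Ioo _) ⟨hWlow ω, hWlt⟩ h1
  have hvw1 : v ≤ᵐ[μ] w := hv.2 w hwub
  have hvw2 : w ≤ᵐ[μ] v := by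
    filter_upwards [hvle] with ω h2
    have hWlt : W ω < π/2 := lt_of_le_of_lt h2 (arctan_lt_pi_div_two _)
    have hwω : w ω = Real.tan (W ω) := hwval ω hWlt
    rw [hwω, ← Real.tan_arctan (v ω)]
    exact Real.strictMonoOn_tan.monotoneOn ⟨hWlow ω, hWlt⟩ (arctan_mem_Ioo _) h2
  have hvw : v =ᵐ[μ] w := hvw1.antisymm hvw2
  -- monotonization
  set combine : (Ω → ℝ) × (Ω → ℝ) → (Ω → ℝ) × (Ω → ℝ) → (Ω → ℝ) × (Ω → ℝ) :=
    fun a b => if h : valid a ∧ valid b then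
      (directed_step hFnull hψ hψint hτ h.1 h.2).choose else a with hcombine
  have hcomb : ∀ a b, valid a → valid b →
      valid (combine a b) ∧ F a ≤ᵐ[μ] F (combine a b) ∧ F b ≤ᵐ[μ] F (combine a b) := by
    intro a b ha hb
    have hspec := (directed_step hFnull hψ hψint hτ ha hb).choose_spec
    simp only [hcombine, dif_pos (And.intro ha hb)]
    exact hspec
  set Q : ℕ → (Ω → ℝ) × (Ω → ℝ) :=
    fun n => Nat.rec (P 0) (fun k qk => combine qk (P (k+1))) n with hQ
  have hQvalid : ∀ n, valid (Q n) := by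
    intro n
    induction n with
    | zero => exact hPvalid 0
    | succ k ih => exact (hcomb _ _ ih (hPvalid (k+1))).1
  have hQmono : ∀ n, F (Q n) ≤ᵐ[μ] F (Q (n+1)) :=
    fun n => (hcomb _ _ (hQvalid n) (hPvalid (n+1))).2.1
  have hPQ : ∀ n, F (P n) ≤ᵐ[μ] F (Q n) := by
    intro n
    cases n with
    | zero => exact Filter.EventuallyLE.refl _ _
    | succ k => exact (hcomb _ _ (hQvalid k) (hPvalid (k+1))).2.2
  have hQle : ∀ n, F (Q n) ≤ᵐ[μ] v := fun n => hv.1 (Q n) (hQvalid n)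
  refine ⟨Q, w, hQvalid, hwm, hvw, ?_⟩
  filter_upwards [ae_all_iff.2 hQmono, ae_all_iff.2 hQle, ae_all_iff.2 hPQ, hvw, hvle]
    with ω h1 h2 h3 h4 h5
  refine ⟨h1, ?_⟩
  have hmono : Monotone fun n => F (Q n) ω := monotone_nat_of_le_succ h1
  have hbd : BddAbove (Set.range fun n => F (Q n) ω) := by
    refine ⟨v ω, ?_⟩
    rintro x ⟨n, rfl⟩
    exact h2 n
  have htend : Filter.Tendsto (fun n => F (Q n) ω) Filter.atTop
      (nhds (⨆ n, F (Q n) ω)) := tendsto_atTop_ciSup hmono hbd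
  have hLle : (⨆ n, F (Q n) ω) ≤ v ω := ciSup_le h2
  have harc : W ω ≤ arctan (⨆ n, F (Q n) ω) := by
    refine ciSup_le fun n => ?_
    refine le_trans (arctan_strictMono.monotone (h3 n)) ?_
    exact arctan_strictMono.monotone (le_ciSup hbd n)
  have hWlt : W ω < π/2 := lt_of_le_of_lt harc (arctan_lt_pi_div_two _)
  have hvtan : v ω = Real.tan (W ω) := by
    rw [h4]; exact hwval ω hWlt
  have hvL : v ω ≤ ⨆ n, F (Q n) ω := by
    rw [hvtan, ← Real.tan_arctan (⨆ n, F (Q n) ω)]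
    exact Real.strictMonoOn_tan.monotoneOn ⟨hWlow ω, hWlt⟩ (arctan_mem_Ioo _) harc
  have : (⨆ n, F (Q n) ω) = v ω := le_antisymm hLle hvL
  rwa [this] at htend

end Aux4

section Aux5
variable {m0 : MeasurableSpace Ω} {μ : Measure Ω} [IsProbabilityMeasure μ]
  {𝓕 : Filtration ℝ m0} {T : ℝ} {ψ : (Ω → ℝ) → (Ω → ℝ) → Ω → ℝ}

/-- One-sided comparison of the value family on `{τ = τ'}`. -/
lemma V_le_on_eq (hFnull : ∀ A : Set Ω, μ A = 0 → MeasurableSet[𝓕 0] A)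
    (hψ : Biadmissible 𝓕 T μ ψ)
    (hψint : ∀ τ₁ τ₂, MemT0 𝓕 T τ₁ → MemT0 𝓕 T τ₂ → Integrable (ψ τ₁ τ₂) μ)
    {τ τ' : Ω → ℝ} (hτ : MemT0 𝓕 T τ) (hτ' : MemT0 𝓕 T τ') {v v' : Ω → ℝ}
    (hv : IsEssSupFam μ
      (fun p : (Ω → ℝ) × (Ω → ℝ) =>
        MemT0 𝓕 T p.1 ∧ MemT0 𝓕 T p.2 ∧ τ ≤ᵐ[μ] p.1 ∧ τ ≤ᵐ[μ] p.2)
      (fun p => μ[ψ p.1 p.2 | hτ.1.measurableSpace]) v)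
    (hv' : IsEssSupFam μ
      (fun p : (Ω → ℝ) × (Ω → ℝ) =>
        MemT0 𝓕 T p.1 ∧ MemT0 𝓕 T p.2 ∧ τ' ≤ᵐ[μ] p.1 ∧ τ' ≤ᵐ[μ] p.2)
      (fun p => μ[ψ p.1 p.2 | hτ'.1.measurableSpace]) v') :
    ∀ᵐ ω ∂(μ.restrict {ω | τ ω = τ' ω}), v ω ≤ v' ω := by
  classical
  set A : Set Ω := {ω | τ ω = τ' ω} with hA
  have hAτ : MeasurableSet[hτ.1.measurableSpace] A :=
    by rw [hA]; simpa using hτ.1.measurableSet_eq_stopping_time hτ'.1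
  have hAτ' : MeasurableSet[hτ'.1.measurableSpace] A :=
    measurableSet_of_subset_eq hτ hτ' (fun _ h => h) hAτ
  have hAm0 : MeasurableSet[m0] A := hτ.1.measurableSpace_le _ hAτ
  set w : Ω → ℝ := fun ω => if ω ∈ A then v' ω else v ω with hw
  have hwub : ∀ p : (Ω → ℝ) × (Ω → ℝ),
      (MemT0 𝓕 T p.1 ∧ MemT0 𝓕 T p.2 ∧ τ ≤ᵐ[μ] p.1 ∧ τ ≤ᵐ[μ] p.2) →
      μ[ψ p.1 p.2 | hτ.1.measurableSpace] ≤ᵐ[μ] w := by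
    intro p hp
    set p1 : Ω → ℝ := fun ω => if ω ∈ A then p.1 ω else τ' ω with hp1
    set p2 : Ω → ℝ := fun ω => if ω ∈ A then p.2 ω else τ' ω with hp2
    have hrefl : τ' ≤ᵐ[μ] τ' := Filter.Eventually.of_forall fun ω => le_refl _
    have hp1T : MemT0 𝓕 T p1 :=
      memT0_piecewise hFnull hτ hτ' hp.1 hτ' hAτ hAτ'.compl hp.2.2.1 hrefl
    have hp2T : MemT0 𝓕 T p2 :=
      memT0_piecewise hFnull hτ hτ' hp.2.1 hτ' hAτ hAτ'.compl hp.2.2.2 hrefl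
    have hτ'p1 : τ' ≤ᵐ[μ] p1 := by
      filter_upwards [hp.2.2.1] with ω h
      by_cases hω : ω ∈ A
      · have : τ ω = τ' ω := hω
        simp only [hp1, if_pos hω]
        rw [← this]; exact h
      · simp only [hp1, if_neg hω]
        exact le_refl _
    have hτ'p2 : τ' ≤ᵐ[μ] p2 := by
      filter_upwards [hp.2.2.2] with ω h
      by_cases hω : ω ∈ A
      · have : τ ω = τ' ω := hω
        simp only [hp2, if_pos hω]
        rw [← this]; exact h
      · simp only [hp2, if_neg hω]
        exact le_refl _
    have e1 : μ[ψ p.1 p.2 | hτ.1.measurableSpace]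
        =ᵐ[μ.restrict A] μ[ψ p.1 p.2 | hτ'.1.measurableSpace] :=
      condexp_ae_eq_on_eq hτ hτ' _
    have heq : ψ p.1 p.2 =ᵐ[μ.restrict A] ψ p1 p2 := by
      have h2 := hψ.2 p.1 p1 p.2 p2 hp.1 hp1T hp.2.1 hp2T
      rw [Filter.EventuallyEq, ae_restrict_iff' hAm0]
      filter_upwards [h2] with ω h hmem
      exact h (by simp [hp1, hmem]) (by simp [hp2, hmem])
    have e2 : μ[ψ p.1 p.2 | hτ'.1.measurableSpace]
        =ᵐ[μ.restrict A] μ[ψ p1 p2 | hτ'.1.measurableSpace] :=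
      condexp_restrict_congr hτ'.1.measurableSpace_le hAτ'
        (hψint _ _ hp.1 hp.2.1) (hψint _ _ hp1T hp2T) heq
    have e3 : μ[ψ p1 p2 | hτ'.1.measurableSpace] ≤ᵐ[μ] v' :=
      hv'.1 (p1, p2) ⟨hp1T, hp2T, hτ'p1, hτ'p2⟩
    refine ae_of_ae_restrict_of_ae_restrict_compl A ?_ ?_
    · have hmem : ∀ᵐ ω ∂(μ.restrict A), ω ∈ A :=
        (ae_restrict_iff' hAm0).mpr (Filter.Eventually.of_forall fun ω h => h)
      filter_upwards [e1, e2, ae_restrict_of_ae e3, hmem] with ω h1 h2 h3 hm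
      rw [h1, h2]
      simp only [hw, if_pos hm]
      exact h3
    · have hmem : ∀ᵐ ω ∂(μ.restrict Aᶜ), ω ∈ Aᶜ :=
        (ae_restrict_iff' hAm0.compl).mpr (Filter.Eventually.of_forall fun ω h => h)
      have e4 : μ[ψ p.1 p.2 | hτ.1.measurableSpace] ≤ᵐ[μ] v := hv.1 p hp
      filter_upwards [ae_restrict_of_ae e4, hmem] with ω h1 hm
      simp only [hw, if_neg hm]
      exact h1
  have hvw : v ≤ᵐ[μ] w := hv.2 w hwub
  have hmem : ∀ᵐ ω ∂(μ.restrict A), ω ∈ A :=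
    (ae_restrict_iff' hAm0).mpr (Filter.Eventually.of_forall fun ω h => h)
  filter_upwards [ae_restrict_of_ae hvw, hmem] with ω h1 hm
  rw [hw] at h1
  simpa [if_pos hm] using h1

end Aux5


/-- For a biadmissible family `ψ`, the double-stopping value
family `v(S) = ess sup_{τ₁,τ₂ ∈ T_S} E[ψ(τ₁,τ₂) | F_S]` is admissible and is a
supermartingale system. -/
theorem double_value_family_admissible_supermartingale
    {m0 : MeasurableSpace Ω} (μ : Measure Ω) [IsProbabilityMeasure μ]
    (𝓕 : Filtration ℝ m0) (T : ℝ) (hT : 0 ≤ T)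
    (hFright : ∀ t : ℝ, 𝓕 t = ⨅ s ∈ Set.Ioi t, 𝓕 s)
    (hFnull : ∀ A : Set Ω, μ A = 0 → MeasurableSet[𝓕 0] A)
    (ψ : (Ω → ℝ) → (Ω → ℝ) → Ω → ℝ)
    (hψ : Biadmissible 𝓕 T μ ψ)
    (hψint : ∀ τ₁ τ₂, MemT0 𝓕 T τ₁ → MemT0 𝓕 T τ₂ → Integrable (ψ τ₁ τ₂) μ)
    (V : (Ω → ℝ) → Ω → ℝ)
    (hV : ∀ S (hS : MemT0 𝓕 T S),
      IsEssSupFam μ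
        (fun p : (Ω → ℝ) × (Ω → ℝ) =>
          MemT0 𝓕 T p.1 ∧ MemT0 𝓕 T p.2 ∧ S ≤ᵐ[μ] p.1 ∧ S ≤ᵐ[μ] p.2)
        (fun p => μ[ψ p.1 p.2 | hS.1.measurableSpace]) (V S)) :
    AdmissibleAE 𝓕 T μ V ∧
    ∀ S, MemT0 𝓕 T S →
      ∀ θ θ' (_hθ : MemT0 𝓕 T θ) (hθ' : MemT0 𝓕 T θ'),
        S ≤ᵐ[μ] θ → S ≤ᵐ[μ] θ' → θ' ≤ᵐ[μ] θ →
        μ[V θ | hθ'.1.measurableSpace] ≤ᵐ[μ] V θ' := by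
  classical
  have hnonneg : ∀ τ (hτ : MemT0 𝓕 T τ), ∀ᵐ ω ∂μ, 0 ≤ V τ ω := by
    intro τ hτ
    have hrefl : τ ≤ᵐ[μ] τ := Filter.Eventually.of_forall fun ω => le_refl _
    have h1 : μ[ψ τ τ | hτ.1.measurableSpace] ≤ᵐ[μ] V τ :=
      (hV τ hτ).1 (τ, τ) ⟨hτ, hτ, hrefl, hrefl⟩
    have h0 : 0 ≤ᵐ[μ] μ[ψ τ τ | hτ.1.measurableSpace] :=
      condExp_nonneg (Filter.Eventually.of_forall fun ω => (hψ.1 τ τ hτ hτ).2 ω)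
    filter_upwards [h1, h0] with ω a b
    exact le_trans b a
  refine ⟨⟨?_, ?_⟩, ?_⟩
  · intro τ hτ
    refine ⟨hnonneg τ hτ, ?_⟩
    obtain ⟨Q, w, _, hwm, hvw, _⟩ := key_seq hFnull hψ hψint hτ (hV τ hτ)
    exact ⟨w, hwm, hvw⟩
  · intro τ τ' hτ hτ'
    have h1 := V_le_on_eq hFnull hψ hψint hτ hτ' (hV τ hτ) (hV τ' hτ')
    have h2 := V_le_on_eq hFnull hψ hψint hτ' hτ (hV τ' hτ') (hV τ hτ)
    have h1' := ae_imp_of_ae_restrict h1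
    have h2' := ae_imp_of_ae_restrict h2
    filter_upwards [h1', h2'] with ω ha hb hEq
    exact le_antisymm (ha hEq) (hb hEq.symm)
  · intro S hS θ θ' hθ hθ' _ _ hle'
    have hleMS : hθ'.1.measurableSpace ≤ hθ.1.measurableSpace :=
      measurableSpace_mono_ae hFnull hθ' hθ hle'
    set mθ := hθ.1.measurableSpace with hmθ
    set mθ' := hθ'.1.measurableSpace with hmθ'
    by_cases hint : Integrable (V θ) μ
    · obtain ⟨Q, w, hQvalid, _, _, hae⟩ := key_seq hFnull hψ hψint hθ (hV θ hθ)
      set F : ℕ → Ω → ℝ := fun n => μ[ψ (Q n).1 (Q n).2 | mθ] with hFdef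
      have hFint : ∀ n, Integrable (F n) μ := fun n => integrable_condExp
      set g : ℕ → Ω → ℝ := fun n => V θ - F n with hgdef
      have hgint : ∀ n, Integrable (g n) μ := fun n => hint.sub (hFint n)
      have hgle : ∀ n, 0 ≤ᵐ[μ] g n := by
        intro n
        filter_upwards [(hV θ hθ).1 (Q n) (hQvalid n)] with ω h
        simpa [hgdef] using h
      have hganti : ∀ n, g (n+1) ≤ᵐ[μ] g n := by
        intro n
        filter_upwards [hae] with ω h
        have := h.1 n
        simp only [hgdef, Pi.sub_apply]
        exact sub_le_sub_left this _
      have hgtend : ∀ᵐ ω ∂μ, Filter.Tendsto (fun n => g n ω) Filter.atTop (nhds 0) := by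
        filter_upwards [hae] with ω h
        have := Filter.Tendsto.sub (tendsto_const_nhds (x := V θ ω)) h.2
        simpa [hgdef] using this
      have hIg : Filter.Tendsto (fun n => ∫ ω, g n ω ∂μ) Filter.atTop (nhds 0) := by
        have h0 : (0:ℝ) = ∫ ω, (0:ℝ) ∂μ := by simp
        rw [h0]
        refine tendsto_integral_of_dominated_convergence (fun ω => |g 0 ω|)
          (fun n => (hgint n).aestronglyMeasurable) (hgint 0).abs ?_ ?_
        · intro n
          filter_upwards [ae_all_iff.2 hgle, ae_all_iff.2 hganti] with ω h1 h2
          have hmon : ∀ k, g k ω ≤ g 0 ω := by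
            intro k
            induction k with
            | zero => exact le_refl _
            | succ j ih => exact le_trans (h2 j) ih
          rw [Real.norm_eq_abs, abs_of_nonneg (h1 n)]
          exact le_trans (hmon n) (le_abs_self _)
        · exact hgtend
      set h : ℕ → Ω → ℝ := fun n => μ[g n | mθ'] with hhdef
      have hhint : ∀ n, Integrable (h n) μ := fun n => integrable_condExp
      have hIh : Filter.Tendsto (fun n => ∫ ω, h n ω ∂μ) Filter.atTop (nhds 0) := by
        have : (fun n => ∫ ω, h n ω ∂μ) = fun n => ∫ ω, g n ω ∂μ := by
          funext n
          exact integral_condExp hθ'.1.measurableSpace_le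
        rw [this]
        exact hIg
      have hhanti : ∀ n, h (n+1) ≤ᵐ[μ] h n :=
        fun n => condExp_mono (hgint (n+1)) (hgint n) (hganti n)
      have hhnn : ∀ n, 0 ≤ᵐ[μ] h n := fun n => condExp_nonneg (hgle n)
      set L : Ω → ℝ := fun ω => ⨅ n, h n ω with hLdef
      have hLm : Measurable[m0] L :=
        Measurable.iInf fun n =>
          (stronglyMeasurable_condExp.mono hθ'.1.measurableSpace_le).measurable
      have hL0 : ∀ᵐ ω ∂μ, 0 ≤ L ω := by
        filter_upwards [ae_all_iff.2 hhnn] with ω h1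
        exact le_ciInf h1
      have hLbdd : ∀ᵐ ω ∂μ, ∀ n, L ω ≤ h n ω := by
        filter_upwards [ae_all_iff.2 hhnn] with ω h1 n
        exact ciInf_le ⟨0, by rintro x ⟨k, rfl⟩; exact h1 k⟩ n
      have hLint : Integrable L μ := by
        refine Integrable.mono' (hhint 0).abs hLm.aestronglyMeasurable ?_
        filter_upwards [hL0, hLbdd] with ω h1 h2
        rw [Real.norm_eq_abs, abs_of_nonneg h1]
        exact le_trans (h2 0) (le_abs_self _)
      have hIL : ∀ n, ∫ ω, L ω ∂μ ≤ ∫ ω, h n ω ∂μ := by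
        intro n
        refine integral_mono_ae hLint (hhint n) ?_
        filter_upwards [hLbdd] with ω h1
        exact h1 n
      have hILz : ∫ ω, L ω ∂μ = 0 := by
        refine le_antisymm ?_ (integral_nonneg_of_ae hL0)
        exact ge_of_tendsto hIh (Filter.Eventually.of_forall hIL)
      have hLz : L =ᵐ[μ] 0 :=
        (integral_eq_zero_iff_of_nonneg_ae hL0 hLint).mp hILz
      have htower : ∀ n, μ[F n | mθ'] =ᵐ[μ] μ[ψ (Q n).1 (Q n).2 | mθ'] :=
        fun n => condExp_condExp_of_le hleMS hθ.1.measurableSpace_le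
      have hbound : ∀ n, μ[ψ (Q n).1 (Q n).2 | mθ'] ≤ᵐ[μ] V θ' := by
        intro n
        refine (hV θ' hθ').1 (Q n) ⟨(hQvalid n).1, (hQvalid n).2.1, ?_, ?_⟩
        · exact hle'.trans (hQvalid n).2.2.1
        · exact hle'.trans (hQvalid n).2.2.2
      have hsub : ∀ n, h n =ᵐ[μ] μ[V θ | mθ'] - μ[F n | mθ'] :=
        fun n => condExp_sub hint (hFint n) mθ'
      filter_upwards [ae_all_iff.2 hsub, ae_all_iff.2 htower, ae_all_iff.2 hbound,
        ae_all_iff.2 hhnn, hLz] with ω h1 h2 h3 h4 h5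
      have hkey : ∀ n, (μ[V θ | mθ']) ω - V θ' ω ≤ h n ω := by
        intro n
        have e1 : h n ω = (μ[V θ | mθ']) ω - (μ[F n | mθ']) ω := by
          have := h1 n
          simpa using this
        have e2 : (μ[F n | mθ']) ω = (μ[ψ (Q n).1 (Q n).2 | mθ']) ω := h2 n
        rw [e1, e2]
        exact sub_le_sub_left (h3 n) _
      have : (μ[V θ | mθ']) ω - V θ' ω ≤ L ω := le_ciInf hkey
      have h5' : L ω = 0 := h5
      rw [h5'] at this
      linarith
    · rw [condExp_of_not_integrable hint]
      filter_upwards [hnonneg θ' hθ'] with ω hω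
      simpa using hω
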